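/- Let α > 1, A > 0, and let Ψ : [A,∞) → (0,∞) be continuously differentiable with Ψ(u)/u → ∞ and uΨ'(u)/Ψ(u) → α as u → ∞, and T := ∫_A^∞ du/Ψ(u) < ∞. Let v : (0,T) → (A,∞) be the (unique, decreasing) function determined by ∫_{v(t)}^∞ du/Ψ(u) = t for all t ∈ (0,T). Then v(t)/(t Ψ(v(t))) → α − 1 as t → 0+; equivalently, since v is differentiable with v'(t) = −Ψ(v(t)), one has t v'(t)/v(t) → −1/(α−1) as t → 0+. -/

import Mathlib

open MeasureTheory Filter Set

/-- let `Ψ : [A,∞) → (0,∞)` be continuously differentiable with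
`Ψ(u)/u → ∞`, `u Ψ'(u)/Ψ(u) → α > 1` as `u → ∞`, and `T := ∫_A^∞ du/Ψ(u) < ∞`.
If `v : (0,T) → (A,∞)` is determined by `∫_{v(t)}^∞ du/Ψ(u) = t`, then
`v(t)/(t Ψ(v(t))) → α - 1` as `t → 0+`. -/
theorem stmt9 (α A : ℝ) (hα : 1 < α) (hA : 0 < A)
    (Ψ Ψ' : ℝ → ℝ)
    (hΨpos : ∀ u ∈ Set.Ici A, 0 < Ψ u)
    (hderiv : ∀ u ∈ Set.Ici A, HasDerivWithinAt Ψ (Ψ' u) (Set.Ici A) u)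
    (hcont : ContinuousOn Ψ' (Set.Ici A))
    (hgrow : Tendsto (fun u : ℝ => Ψ u / u) atTop atTop)
    (hindex : Tendsto (fun u : ℝ => u * Ψ' u / Ψ u) atTop (nhds α))
    (hint : IntegrableOn (fun u : ℝ => (Ψ u)⁻¹) (Set.Ici A))
    (T : ℝ) (hT : T = ∫ u in Set.Ici A, (Ψ u)⁻¹)
    (v : ℝ → ℝ)
    (hv : ∀ t ∈ Set.Ioo (0 : ℝ) T, A < v t ∧ ∫ u in Set.Ici (v t), (Ψ u)⁻¹ = t) :
    Tendsto (fun t : ℝ => v t / (t * Ψ (v t))) (nhdsWithin 0 (Set.Ioi 0))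
      (nhds (α - 1)) := by
  set F : ℝ → ℝ := fun x => ∫ u in Set.Ici x, (Ψ u)⁻¹ with hFdef
  -- splitting lemma
  have hsplit : ∀ a b : ℝ, A ≤ a → a ≤ b →
      F a = (∫ u in Set.Ioc a b, (Ψ u)⁻¹) + F b := by
    intro a b hAa hab
    have h1 : F a = ∫ u in Set.Ioi a, (Ψ u)⁻¹ := integral_Ici_eq_integral_Ioi
    have h2 : F b = ∫ u in Set.Ioi b, (Ψ u)⁻¹ := integral_Ici_eq_integral_Ioi
    rw [h1, h2, ← Set.Ioc_union_Ioi_eq_Ioi hab]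
    exact setIntegral_union (Set.Ioc_disjoint_Ioi le_rfl) measurableSet_Ioi
      (hint.mono_set (fun x hx => le_trans hAa (le_of_lt hx.1)))
      (hint.mono_set (fun x hx => le_trans (le_trans hAa hab) (le_of_lt hx)))
  -- antitonicity
  have hanti : ∀ a b : ℝ, A ≤ a → a ≤ b → F b ≤ F a := by
    intro a b hAa hab
    rw [hsplit a b hAa hab]
    have : 0 ≤ ∫ u in Set.Ioc a b, (Ψ u)⁻¹ :=
      setIntegral_nonneg measurableSet_Ioc (fun u hu =>
        inv_nonneg.2 (le_of_lt (hΨpos u (le_trans hAa (le_of_lt hu.1)))))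
    linarith
  -- positivity of F
  have hFpos : ∀ x : ℝ, A ≤ x → 0 < F x := by
    intro x hx
    have hnn : 0 ≤ᵐ[volume.restrict (Set.Ici x)] fun u => (Ψ u)⁻¹ :=
      (ae_restrict_iff' measurableSet_Ici).2 (Filter.Eventually.of_forall
        (fun u hu => inv_nonneg.2 (le_of_lt (hΨpos u (le_trans hx hu)))))
    have hi : IntegrableOn (fun u : ℝ => (Ψ u)⁻¹) (Set.Ici x) :=
      hint.mono_set (Set.Ici_subset_Ici.2 hx)
    rw [hFdef]
    rw [setIntegral_pos_iff_support_of_nonneg_ae hnn hi]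
    have hsub : Set.Ici x ⊆ Function.support (fun u => (Ψ u)⁻¹) ∩ Set.Ici x := by
      intro u hu
      exact ⟨inv_ne_zero (ne_of_gt (hΨpos u (le_trans hx hu))), hu⟩
    calc (0 : ENNReal) < ⊤ := by simp
      _ = volume (Set.Ici x) := (Real.volume_Ici).symm
      _ ≤ _ := measure_mono hsub
  have hTA : T = F A := hT
  have hTpos : 0 < T := hTA ▸ hFpos A le_rfl
  -- F tends to 0 at atTop
  have hF0 : Tendsto F atTop (nhds 0) := by
    have hIoi : IntegrableOn (fun u : ℝ => (Ψ u)⁻¹) (Set.Ioi A) :=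
      hint.mono_set Set.Ioi_subset_Ici_self
    have h1 : Tendsto (fun b => ∫ u in A..b, (Ψ u)⁻¹) atTop
        (nhds (∫ u in Set.Ioi A, (Ψ u)⁻¹)) :=
      intervalIntegral_tendsto_integral_Ioi A hIoi tendsto_id
    have h2 : (∫ u in Set.Ioi A, (Ψ u)⁻¹) = F A := integral_Ici_eq_integral_Ioi.symm
    have h3 : Tendsto (fun b => F A - ∫ u in A..b, (Ψ u)⁻¹) atTop (nhds (F A - F A)) :=
      (tendsto_const_nhds).sub (h2 ▸ h1)
    rw [sub_self] at h3
    refine h3.congr' ?_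
    filter_upwards [eventually_ge_atTop A] with b hb
    rw [intervalIntegral.integral_of_le hb, hsplit A b le_rfl hb]
    ring
  -- continuity of Ψ, and pointwise facts on Ioi A
  have hΨcont : ∀ x : ℝ, A < x → ContinuousAt Ψ x := by
    intro x hx
    exact (hderiv x (le_of_lt hx)).continuousWithinAt.continuousAt
      (Ici_mem_nhds hx)
  have hΨderivAt : ∀ x : ℝ, A < x → HasDerivAt Ψ (Ψ' x) x := by
    intro x hx
    exact (hderiv x (le_of_lt hx)).hasDerivAt (Ici_mem_nhds hx)
  -- derivative of F on Ioi A
  have hFderiv : ∀ x : ℝ, A < x → HasDerivAt F (-(Ψ x)⁻¹) x := by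
    intro x hx
    have hii : IntervalIntegrable (fun u : ℝ => (Ψ u)⁻¹) volume A x := by
      refine (hint.mono_set ?_).intervalIntegrable
      rw [Set.uIcc_of_le (le_of_lt hx)]
      exact Set.Icc_subset_Ici_self
    have hca : ContinuousAt (fun u : ℝ => (Ψ u)⁻¹) x :=
      (hΨcont x hx).inv₀ (ne_of_gt (hΨpos x (le_of_lt hx)))
    have hmeas : StronglyMeasurableAtFilter (fun u : ℝ => (Ψ u)⁻¹) (nhds x) volume := by
      refine ContinuousOn.stronglyMeasurableAtFilter isOpen_Ioi ?_ x hx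
      intro u hu
      exact ((hΨcont u hu).inv₀ (ne_of_gt (hΨpos u (Set.mem_Ici.2 (le_of_lt (Set.mem_Ioi.1 hu)))))).continuousWithinAt
    have hd : HasDerivAt (fun y => F A - ∫ u in A..y, (Ψ u)⁻¹) (-(Ψ x)⁻¹) x := by
      have h := (hasDerivAt_const x (F A)).sub
        (intervalIntegral.integral_hasDerivAt_right hii hmeas hca)
      rw [zero_sub] at h
      exact h
    refine hd.congr_of_eventuallyEq ?_
    filter_upwards [isOpen_Ioi.mem_nhds hx] with y (hy : A < y)
    rw [intervalIntegral.integral_of_le (le_of_lt hy), hsplit A y le_rfl (le_of_lt hy)]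
    ring
  -- G and its derivative
  set G : ℝ → ℝ := fun x => x / Ψ x with hGdef
  have hGderiv : ∀ x : ℝ, A < x →
      HasDerivAt G ((1 * Ψ x - x * Ψ' x) / (Ψ x) ^ 2) x := by
    intro x hx
    exact (hasDerivAt_id x).div (hΨderivAt x hx) (ne_of_gt (hΨpos x (le_of_lt hx)))
  -- G → 0 at atTop
  have hG0 : Tendsto G atTop (nhds 0) := by
    have := hgrow.inv_tendsto_atTop
    refine this.congr (fun u => ?_)
    simp [hGdef, inv_div]
  -- L'Hôpital
  have hGF : Tendsto (fun x => G x / F x) atTop (nhds (α - 1)) := by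
    refine HasDerivAt.lhopital_zero_atTop
      (f' := fun x => (1 * Ψ x - x * Ψ' x) / (Ψ x) ^ 2)
      (g' := fun x => -(Ψ x)⁻¹) ?_ ?_ ?_ hG0 hF0 ?_
    · filter_upwards [eventually_gt_atTop A] with x hx using hGderiv x hx
    · filter_upwards [eventually_gt_atTop A] with x hx using hFderiv x hx
    · filter_upwards [eventually_gt_atTop A] with x hx
      exact neg_ne_zero.2 (inv_ne_zero (ne_of_gt (hΨpos x (le_of_lt hx))))
    · have h : Tendsto (fun x => x * Ψ' x / Ψ x - 1) atTop (nhds (α - 1)) :=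
        hindex.sub tendsto_const_nhds
      refine h.congr' ?_
      filter_upwards [eventually_gt_atTop A] with x hx
      have hne : Ψ x ≠ 0 := ne_of_gt (hΨpos x (le_of_lt hx))
      field_simp
      ring
  -- v tends to atTop
  have hvtop : Tendsto v (nhdsWithin 0 (Set.Ioi 0)) atTop := by
    rw [tendsto_atTop]
    intro M
    set M' : ℝ := max M A with hM'
    have hM'A : A ≤ M' := le_max_right _ _
    have hmin : 0 < min T (F M') := lt_min hTpos (hFpos M' hM'A)
    filter_upwards [Ioo_mem_nhdsGT_of_mem (Set.mem_Ico.2 ⟨le_rfl, hmin⟩)] with t ht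
    have htT : t ∈ Set.Ioo (0 : ℝ) T :=
      ⟨ht.1, lt_of_lt_of_le ht.2 (min_le_left _ _)⟩
    obtain ⟨hvA, hvF⟩ := hv t htT
    by_contra hM
    push_neg at hM
    have hvM' : v t ≤ M' := le_trans (le_of_lt hM) (le_max_left _ _)
    have : F M' ≤ F (v t) := hanti (v t) M' (le_of_lt hvA) hvM'
    have hft : F (v t) = t := hvF
    rw [hft] at this
    exact absurd (lt_of_lt_of_le ht.2 (min_le_right _ _)) (not_lt.2 this)
  -- compose
  have hcomp : Tendsto (fun t => G (v t) / F (v t)) (nhdsWithin 0 (Set.Ioi 0))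
      (nhds (α - 1)) := hGF.comp hvtop
  refine hcomp.congr' ?_
  filter_upwards [Ioo_mem_nhdsGT_of_mem (Set.mem_Ico.2 ⟨le_rfl, hTpos⟩)] with t ht
  obtain ⟨hvA, hvF⟩ := hv t ht
  show G (v t) / F (v t) = v t / (t * Ψ (v t))
  rw [show F (v t) = t from hvF, hGdef]
  rw [div_div, mul_comm]
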